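/- Let β, b ∈ ℕ^m and A ∈ ℕ^{m×n} with columns A_1,…,A_n satisfy b ≤ β and A_k ≤ β for all k. If 𝐲 = (y[k,u]) is a real vector with y[k,u] ≥ 0 for all 1 ≤ k ≤ n and u ∈ ℕ^m, u ≤ β − A_k, satisfying Θ𝐲 = 𝐛, then the vector x̂ ∈ ℝ^n defined by x̂_k := Σ_{u ≤ β−A_k} y[k,u] satisfies A x̂ = b and x̂ belongs to the convex hull (in ℝ^n) of the set {x ∈ ℕ^n : Ax = b}. -/

import Mathlib

/-- Row index set: vectors `w ∈ ℕ^m` with `w ≤ β` (entrywise). -/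
abbrev RowIdx (m : ℕ) (β : Fin m → ℕ) : Type := ∀ j : Fin m, Fin (β j + 1)

/-- Column index set: pairs `(k, u)` with `1 ≤ k ≤ n` and `u ∈ ℕ^m`, `u ≤ β - A_k`. -/
abbrev ColIdx (m n : ℕ) (β : Fin m → ℕ) (A : Matrix (Fin m) (Fin n) ℕ) : Type :=
  Σ k : Fin n, ∀ j : Fin m, Fin (β j - A j k + 1)

/-- The network matrix `Θ`: `Θ[w;(k,u)] = -1` if `w = u`, `+1` if `w = u + A_k`,
and `0` otherwise. -/
noncomputable def theta (m n : ℕ) (β : Fin m → ℕ) (A : Matrix (Fin m) (Fin n) ℕ) :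
    Matrix (RowIdx m β) (ColIdx m n β A) ℝ := Matrix.of fun w c =>
  if (fun j => (w j : ℕ)) = (fun j => (c.2 j : ℕ)) then -1
  else if (fun j => (w j : ℕ)) = (fun j => (c.2 j : ℕ) + A j c.1) then 1 else 0

/-- The vector `𝐛`: `𝐛[w] = (1 if w = b else 0) - (1 if w = 0 else 0)`. -/
noncomputable def bvec (m : ℕ) (β b : Fin m → ℕ) : RowIdx m β → ℝ := fun w =>
  (if (fun j => (w j : ℕ)) = b then 1 else 0)
    - (if (fun j => (w j : ℕ)) = (fun _ => (0 : ℕ)) then 1 else 0)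

open Finset
set_option linter.unusedSectionVars false

section Abstract
variable {V E : Type*} [Fintype V] [Fintype E] [DecidableEq V] [DecidableEq E]

/-- A path (list of arcs) from `s` to `t`. -/
def IsPath (src tgt : E → V) : V → V → List E → Prop
  | s, t, [] => s = t
  | s, t, (e :: p) => src e = s ∧ IsPath src tgt (tgt e) t p

lemma path_src_lb (src tgt : E → V) (φ : V → ℕ) (hφ : ∀ e, φ (src e) < φ (tgt e)) (t : V) :
    ∀ (p : List E) (v : V), IsPath src tgt v t p → ∀ e ∈ p, φ v ≤ φ (src e) := by
  intro p
  induction p with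
  | nil => intro v _ e he; simp at he
  | cons a q ihq =>
    intro v hp e he
    obtain ⟨ha, hq⟩ := hp
    rcases List.mem_cons.1 he with rfl | he'
    · rw [ha]
    · exact le_trans (le_of_lt (ha ▸ hφ a)) (ihq (tgt a) hq e he')

lemma path_nodup (src tgt : E → V) (φ : V → ℕ) (hφ : ∀ e, φ (src e) < φ (tgt e)) (t : V) :
    ∀ (p : List E) (v : V), IsPath src tgt v t p → p.Nodup := by
  intro p
  induction p with
  | nil => intro v _; exact List.nodup_nil
  | cons a q ihq =>
    intro v hp
    obtain ⟨ha, hq⟩ := hp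
    refine List.nodup_cons.2 ⟨?_, ihq (tgt a) hq⟩
    intro hmem
    have := path_src_lb src tgt φ hφ t q (tgt a) hq a hmem
    have := hφ a
    omega

/-- Nonnegative circulations on an acyclic graph vanish. -/
lemma circ_eq_zero (src tgt : E → V) (φ : V → ℕ) (hφ : ∀ e, φ (src e) < φ (tgt e))
    (f : E → ℝ) (hf : ∀ e, 0 ≤ f e)
    (hdiv : ∀ v, (∑ e, if tgt e = v then f e else 0) = (∑ e, if src e = v then f e else 0)) :
    ∀ e, f e = 0 := by
  classical
  set B := Finset.univ.sup φ with hB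
  have hle : ∀ v : V, φ v ≤ B := fun v => Finset.le_sup (Finset.mem_univ v)
  suffices h : ∀ d : ℕ, ∀ e : E, B - φ (tgt e) ≤ d → f e = 0 by
    intro e; exact h _ e le_rfl
  intro d
  induction d using Nat.strong_induction_on with
  | _ d ih =>
    intro e he
    have hout : ∀ e', src e' = tgt e → f e' = 0 := by
      intro e' h'
      have h1 : φ (tgt e) < φ (tgt e') := by
        have := hφ e'; rw [h'] at this; exact this
      have h2 := hle (tgt e')
      exact ih (B - φ (tgt e')) (by omega) e' le_rfl
    have h0 : (∑ e', if tgt e' = tgt e then f e' else 0) = 0 := by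
      rw [hdiv]
      apply Finset.sum_eq_zero
      intro e' _
      split
      · exact hout e' ‹_›
      · rfl
    have := (Finset.sum_eq_zero_iff_of_nonneg (by intro e' _; split; exacts [hf e', le_rfl])).1 h0 e (Finset.mem_univ e)
    simpa using this

/-- If a node other than `s` has positive inflow (or is `t`), there is a positive path to `t`. -/
lemma exists_pos_path (src tgt : E → V) (φ : V → ℕ) (hφ : ∀ e, φ (src e) < φ (tgt e))
    (s t : V) (hst : ∀ e, tgt e ≠ s)
    (f : E → ℝ) (hf : ∀ e, 0 ≤ f e)
    (hdiv : ∀ v, (∑ e, if tgt e = v then f e else 0) - (∑ e, if src e = v then f e else 0)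
      = (if v = t then 1 else 0) - (if v = s then 1 else 0)) :
    ∀ d : ℕ, ∀ v : V, (Finset.univ.sup φ) - φ v ≤ d → v ≠ s →
      (v = t ∨ 0 < (∑ e, if tgt e = v then f e else 0)) →
      ∃ p : List E, IsPath src tgt v t p ∧ ∀ e ∈ p, 0 < f e := by
  classical
  set B := Finset.univ.sup φ with hB
  have hle : ∀ v : V, φ v ≤ B := fun v => Finset.le_sup (Finset.mem_univ v)
  intro d
  induction d using Nat.strong_induction_on with
  | _ d ih =>
    intro v hd hvs hv
    by_cases hvt : v = t
    · exact ⟨[], hvt, by simp⟩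
    · rcases hv with hv | hv
      · exact absurd hv hvt
      have hdv := hdiv v
      rw [if_neg hvt, if_neg hvs] at hdv
      have hout : 0 < (∑ e, if src e = v then f e else 0) := by linarith
      have hex : ∃ e, src e = v ∧ 0 < f e := by
        by_contra hcon
        push_neg at hcon
        have : (∑ e, if src e = v then f e else 0) = 0 := by
          apply Finset.sum_eq_zero
          intro e _
          split
          · rename_i h; have h1 := hcon e h; have h2 := hf e; linarith
          · rfl
        linarith
      obtain ⟨e, hes, hef⟩ := hex
      set w := tgt e with hw
      have hws : w ≠ s := hst e
      have hinw : 0 < (∑ e', if tgt e' = w then f e' else 0) := by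
        have hle' : (if tgt e = w then f e else 0) ≤ ∑ e', if tgt e' = w then f e' else 0 := by
          apply Finset.single_le_sum (f := fun e' => if tgt e' = w then f e' else 0)
          · intro e' _; split; exacts [hf e', le_rfl]
          · exact Finset.mem_univ e
        rw [if_pos rfl] at hle'
        linarith
      have hφw : φ v < φ w := by rw [← hes]; exact hφ e
      have hwle := hle w
      obtain ⟨p, hp, hpos⟩ := ih (B - φ w) (by omega) w le_rfl hws (Or.inr hinw)
      refine ⟨e :: p, ⟨hes, hp⟩, ?_⟩
      intro e' he'
      rcases List.mem_cons.1 he' with rfl | he'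
      · exact hef
      · exact hpos e' he'

/-- indicator equality helper -/
lemma ind_comm (a b : V) : (if a = b then (1:ℝ) else 0) = if b = a then 1 else 0 := by
  by_cases h : a = b
  · subst h; simp
  · rw [if_neg h, if_neg (fun hh => h hh.symm)]

/-- Divergence of the indicator of a (nodup) path. -/
lemma path_div (src tgt : E → V) (t : V) :
    ∀ (p : List E) (s : V), IsPath src tgt s t p → p.Nodup → ∀ v,
      (∑ e, if tgt e = v then (if e ∈ p then (1:ℝ) else 0) else 0)
        - (∑ e, if src e = v then (if e ∈ p then (1:ℝ) else 0) else 0)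
        = (if v = t then 1 else 0) - (if v = s then 1 else 0) := by
  classical
  intro p
  induction p with
  | nil =>
    intro s hp _ v
    have : s = t := hp
    subst this
    simp
  | cons a q ihq =>
    intro s hp hnd v
    obtain ⟨ha, hq⟩ := hp
    obtain ⟨hnotmem, hndq⟩ := List.nodup_cons.1 hnd
    have hsplit : ∀ e : E, (if e ∈ a :: q then (1:ℝ) else 0)
        = (if e = a then 1 else 0) + (if e ∈ q then 1 else 0) := by
      intro e
      by_cases h1 : e = a
      · subst h1
        simp [hnotmem]
      · by_cases h2 : e ∈ q <;> simp [h1, h2]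
    have key : ∀ (γ : E → V),
        (∑ e, if γ e = v then (if e ∈ a :: q then (1:ℝ) else 0) else 0)
        = (if γ a = v then 1 else 0) + (∑ e, if γ e = v then (if e ∈ q then (1:ℝ) else 0) else 0) := by
      intro γ
      have step : ∀ e : E, (if γ e = v then (if e ∈ a :: q then (1:ℝ) else 0) else 0)
          = (if e = a then (if γ e = v then (1:ℝ) else 0) else 0)
            + (if γ e = v then (if e ∈ q then (1:ℝ) else 0) else 0) := by
        intro e
        by_cases h : γ e = v
        · rw [if_pos h, if_pos h, hsplit e]
          simp [h]
        · simp [h]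
      rw [Finset.sum_congr rfl (fun e _ => step e), Finset.sum_add_distrib]
      congr 1
      rw [Finset.sum_ite_eq' Finset.univ a (fun e => if γ e = v then (1:ℝ) else 0)]
      simp
    rw [key tgt, key src, ha]
    have ih' := ihq (tgt a) hq hndq v
    have h1 : (if tgt a = v then (1:ℝ) else 0) = if v = tgt a then 1 else 0 := ind_comm _ _
    have h2 : (if s = v then (1:ℝ) else 0) = if v = s then 1 else 0 := ind_comm _ _
    rw [h1, h2]
    linarith


/-- Main abstract lemma: a nonnegative unit flow from `s` to `t` in an acyclic graph
is a convex combination of path indicators; hence any linear image lies in the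
convex hull of path sums. -/
theorem flow_hull (src tgt : E → V) (φ : V → ℕ) (hφ : ∀ e, φ (src e) < φ (tgt e))
    (s t : V) (hst : ∀ e, tgt e ≠ s) {n : ℕ} (g : E → (Fin n → ℝ)) :
    ∀ N : ℕ, ∀ f : E → ℝ, (Finset.univ.filter (fun e => f e ≠ 0)).card ≤ N →
      (∀ e, 0 ≤ f e) →
      (∀ v, (∑ e, if tgt e = v then f e else 0) - (∑ e, if src e = v then f e else 0)
        = (if v = t then 1 else 0) - (if v = s then 1 else 0)) →
      (∑ e, f e • g e) ∈ convexHull ℝ {z | ∃ p, IsPath src tgt s t p ∧ z = (p.map g).sum} := by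
  classical
  intro N
  induction N using Nat.strong_induction_on with
  | _ N ih =>
    intro f hcard hf hdiv
    by_cases hstq : s = t
    · -- circulation: f = 0, empty path
      have hz : ∀ e, f e = 0 := by
        apply circ_eq_zero src tgt φ hφ f hf
        intro v
        have := hdiv v
        rw [hstq] at this
        have h2 : ((if v = t then (1:ℝ) else 0) - (if v = t then 1 else 0)) = 0 := by ring
        rw [h2] at this
        linarith
      have : (∑ e, f e • g e) = (([] : List E).map g).sum := by
        simp [hz]
      rw [this]
      apply subset_convexHull
      exact ⟨[], hstq, rfl⟩
    · -- positive flow: extract a path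
      have hins : (∑ e, if tgt e = s then f e else 0) = 0 :=
        Finset.sum_eq_zero (fun e _ => by rw [if_neg (hst e)])
      have houts : (∑ e, if src e = s then f e else 0) = 1 := by
        have := hdiv s
        rw [hins, if_neg hstq, if_pos rfl] at this
        linarith
      have hex : ∃ e, src e = s ∧ 0 < f e := by
        by_contra hcon
        push_neg at hcon
        have : (∑ e, if src e = s then f e else 0) = 0 := by
          apply Finset.sum_eq_zero
          intro e _
          split
          · rename_i h; have h1 := hcon e h; have h2 := hf e; linarith
          · rfl
        rw [houts] at this; norm_num at this
      obtain ⟨e₁, he₁s, he₁f⟩ := hex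
      have hinw : 0 < (∑ e', if tgt e' = tgt e₁ then f e' else 0) := by
        have hle' : (if tgt e₁ = tgt e₁ then f e₁ else 0) ≤ ∑ e', if tgt e' = tgt e₁ then f e' else 0 := by
          apply Finset.single_le_sum (f := fun e' => if tgt e' = tgt e₁ then f e' else 0)
          · intro e' _; split; exacts [hf e', le_rfl]
          · exact Finset.mem_univ e₁
        rw [if_pos rfl] at hle'
        linarith
      obtain ⟨p', hp', hpos'⟩ := exists_pos_path src tgt φ hφ s t hst f hf hdiv
        (Finset.univ.sup φ - φ (tgt e₁)) (tgt e₁) le_rfl (hst e₁) (Or.inr hinw)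
      set p : List E := e₁ :: p' with hpdef
      have hp : IsPath src tgt s t p := ⟨he₁s, hp'⟩
      have hpos : ∀ e ∈ p, 0 < f e := by
        intro e he
        rcases List.mem_cons.1 he with rfl | he
        · exact he₁f
        · exact hpos' e he
      have hnd : p.Nodup := path_nodup src tgt φ hφ t p s hp
      -- minimal flow along the path
      obtain ⟨e₀, he₀m, he₀min⟩ := Finset.exists_min_image p.toFinset f
        ⟨e₁, List.mem_toFinset.2 (List.mem_cons_self (a := e₁) (l := p'))⟩
      have he₀p : e₀ ∈ p := List.mem_toFinset.1 he₀m
      set ε : ℝ := f e₀ with hεdef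
      have hε0 : 0 < ε := hpos e₀ he₀p
      have hεmin : ∀ e ∈ p, ε ≤ f e := fun e he => he₀min e (List.mem_toFinset.2 he)
      have hε1 : ε ≤ 1 := by
        have h1 : ε ≤ f e₁ := hεmin e₁ (List.mem_cons_self (a := e₁) (l := p'))
        have h2 : f e₁ ≤ (∑ e, if src e = s then f e else 0) := by
          have h2' : (if src e₁ = s then f e₁ else 0) ≤ ∑ e, if src e = s then f e else 0 := by
            apply Finset.single_le_sum (f := fun e => if src e = s then f e else 0)
            · intro e _; split; exacts [hf e, le_rfl]
            · exact Finset.mem_univ e₁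
          rw [if_pos he₁s] at h2'
          exact h2'
        rw [houts] at h2
        linarith
      -- path indicator and reduced flow
      set χ : E → ℝ := fun e => if e ∈ p then (1:ℝ) else 0 with hχdef
      set f' : E → ℝ := fun e => f e - ε * χ e with hf'def
      have hf'nonneg : ∀ e, 0 ≤ f' e := by
        intro e
        simp only [hf'def, hχdef]
        by_cases he : e ∈ p
        · have := hεmin e he; simp [he]; linarith
        · have := hf e; simp [he]; linarith
      have hχsum : ∀ (h : E → ℝ) (v : V),
          (∑ e, if h e = 0 then 0 else 0) = 0 := by intro h v; simp
      -- divergence split for f'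
      have hdivsplit : ∀ (γ : E → V) (v : V),
          (∑ e, if γ e = v then f' e else 0)
            = (∑ e, if γ e = v then f e else 0) - ε * (∑ e, if γ e = v then χ e else 0) := by
        intro γ v
        rw [Finset.mul_sum, ← Finset.sum_sub_distrib]
        apply Finset.sum_congr rfl
        intro e _
        by_cases h : γ e = v <;> simp [h, hf'def]
      have hdiv' : ∀ v, (∑ e, if tgt e = v then f' e else 0) - (∑ e, if src e = v then f' e else 0)
          = (1 - ε) * ((if v = t then 1 else 0) - (if v = s then 1 else 0)) := by
        intro v
        rw [hdivsplit tgt v, hdivsplit src v]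
        have hpd := path_div src tgt t p s hp hnd v
        have hd := hdiv v
        simp only [hχdef]
        nlinarith [hpd, hd]
      -- support decreases
      have hf'e₀ : f' e₀ = 0 := by simp [hf'def, hχdef, he₀p, hεdef]
      have hsupp : (Finset.univ.filter (fun e => f' e ≠ 0))
          ⊆ (Finset.univ.filter (fun e => f e ≠ 0)).erase e₀ := by
        intro e he
        rw [Finset.mem_filter] at he
        rw [Finset.mem_erase, Finset.mem_filter]
        refine ⟨?_, Finset.mem_univ e, ?_⟩
        · rintro rfl; exact he.2 hf'e₀
        · intro hfe
          apply he.2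
          have : e ∉ p := by
            intro hep
            have := hpos e hep
            rw [hfe] at this
            exact lt_irrefl 0 this
          simp [hf'def, hχdef, this, hfe]
      have he₀supp : e₀ ∈ Finset.univ.filter (fun e => f e ≠ 0) := by
        rw [Finset.mem_filter]
        exact ⟨Finset.mem_univ e₀, ne_of_gt hε0⟩
      have hcard' : (Finset.univ.filter (fun e => f' e ≠ 0)).card ≤ N - 1 := by
        have h1 := Finset.card_le_card hsupp
        have h2 := Finset.card_erase_of_mem he₀supp
        omega
      have hN1 : 1 ≤ N := by
        have := Finset.card_pos.2 ⟨e₀, he₀supp⟩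
        omega
      -- path sum
      have hχg : (∑ e, χ e • g e) = (p.map g).sum := by
        have h1 : (∑ e, χ e • g e) = (∑ e, if e ∈ p then g e else 0) := by
          apply Finset.sum_congr rfl
          intro e _
          by_cases h : e ∈ p <;> simp [hχdef, h]
        rw [h1]
        have h2 : (∑ e, if e ∈ p then g e else 0) = (∑ e ∈ p.toFinset, g e) := by
          rw [← Finset.sum_filter]
          apply Finset.sum_congr
          · ext e; simp
          · intros; rfl
        rw [h2]
        exact List.sum_toFinset g hnd
      have hpmem : (p.map g).sum ∈ convexHull ℝ
          {z | ∃ q, IsPath src tgt s t q ∧ z = (q.map g).sum} :=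
        subset_convexHull ℝ _ ⟨p, hp, rfl⟩
      by_cases hεeq : ε = 1
      · -- f is exactly the path indicator
        have hz : ∀ e, f' e = 0 := by
          apply circ_eq_zero src tgt φ hφ f' hf'nonneg
          intro v
          have := hdiv' v
          rw [hεeq] at this
          simp at this
          linarith
        have hfeq : ∀ e, f e = χ e := by
          intro e
          have := hz e
          simp only [hf'def] at this
          rw [hεeq] at this
          linarith
        have : (∑ e, f e • g e) = (∑ e, χ e • g e) := by
          apply Finset.sum_congr rfl
          intro e _
          rw [hfeq e]
        rw [this, hχg]
        exact hpmem
      · -- recurse on rescaled residual flow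
        have hεlt : ε < 1 := lt_of_le_of_ne hε1 hεeq
        have hc : (0:ℝ) < 1 - ε := by linarith
        set f'' : E → ℝ := fun e => (1 - ε)⁻¹ * f' e with hf''def
        have hf''nonneg : ∀ e, 0 ≤ f'' e := by
          intro e
          exact mul_nonneg (le_of_lt (inv_pos.2 hc)) (hf'nonneg e)
        have hdiv'' : ∀ v, (∑ e, if tgt e = v then f'' e else 0)
            - (∑ e, if src e = v then f'' e else 0)
            = (if v = t then 1 else 0) - (if v = s then 1 else 0) := by
          intro v
          have hsplit : ∀ (γ : E → V),
              (∑ e, if γ e = v then f'' e else 0)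
                = (1 - ε)⁻¹ * (∑ e, if γ e = v then f' e else 0) := by
            intro γ
            rw [Finset.mul_sum]
            apply Finset.sum_congr rfl
            intro e _
            by_cases h : γ e = v <;> simp [h, hf''def]
          rw [hsplit tgt, hsplit src, ← mul_sub, hdiv' v, ← mul_assoc,
            inv_mul_cancel₀ (ne_of_gt hc), one_mul]
        have hcard'' : (Finset.univ.filter (fun e => f'' e ≠ 0)).card ≤ N - 1 := by
          refine le_trans (Finset.card_le_card ?_) hcard'
          intro e he
          rw [Finset.mem_filter] at he ⊢
          refine ⟨he.1, ?_⟩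
          intro h0
          apply he.2
          simp [hf''def, h0]
        have hzmem := ih (N - 1) (by omega) f'' hcard'' hf''nonneg hdiv''
        -- convex combination
        have hcomb : (∑ e, f e • g e)
            = ε • ((p.map g).sum) + (1 - ε) • (∑ e, f'' e • g e) := by
          rw [← hχg, Finset.smul_sum, Finset.smul_sum, ← Finset.sum_add_distrib]
          apply Finset.sum_congr rfl
          intro e _
          rw [smul_smul, smul_smul, ← add_smul]
          congr 1
          simp only [hf''def, hf'def]
          field_simp
          ring
        rw [hcomb]
        exact (convex_convexHull ℝ _) hpmem hzmem (le_of_lt hε0) (by linarith) (by ring)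

end Abstract


section Concrete

variable {m n : ℕ} {A : Matrix (Fin m) (Fin n) ℕ} {β b : Fin m → ℕ}

/-- Arcs: columns whose `A`-column is nonzero. -/
abbrev EIdx (m n : ℕ) (β : Fin m → ℕ) (A : Matrix (Fin m) (Fin n) ℕ) : Type :=
  {c : ColIdx m n β A // ∃ j, 0 < A j c.1}

/-- Source node of an arc. -/
def srcC (c : EIdx m n β A) : RowIdx m β := fun j =>
  ⟨(c.1.2 j : ℕ), by have h := (c.1.2 j).isLt; omega⟩

/-- Target node of an arc. -/
def tgtC (hA : ∀ k j, A j k ≤ β j) (c : EIdx m n β A) : RowIdx m β := fun j =>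
  ⟨(c.1.2 j : ℕ) + A j c.1.1, by have h1 := (c.1.2 j).isLt; have h2 := hA c.1.1 j; omega⟩

lemma rowEq (w : RowIdx m β) (v : Fin m → ℕ) (hv : ∀ j, v j < β j + 1) :
    ((fun j => (w j : ℕ)) = v) ↔ w = (fun j => (⟨v j, hv j⟩ : Fin (β j + 1))) := by
  constructor
  · intro h; funext j; exact Fin.ext (congrFun h j)
  · intro h; subst h; rfl


lemma src_lt (hA : ∀ k j, A j k ≤ β j) (e : EIdx m n β A) :
    ∀ j, (e.1.2 j : ℕ) < β j + 1 := by
  intro j; have h := (e.1.2 j).isLt; omega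

lemma tgt_lt (hA : ∀ k j, A j k ≤ β j) (e : EIdx m n β A) :
    ∀ j, (e.1.2 j : ℕ) + A j e.1.1 < β j + 1 := by
  intro j; have h1 := (e.1.2 j).isLt; have h2 := hA e.1.1 j; omega

lemma src_ne_tgt (hA : ∀ k j, A j k ≤ β j) (e : EIdx m n β A) :
    srcC e ≠ tgtC hA e := by
  obtain ⟨j, hj⟩ := e.2
  intro h
  have := congrFun h j
  have h2 : (e.1.2 j : ℕ) = (e.1.2 j : ℕ) + A j e.1.1 := congrArg Fin.val this
  omega

lemma theta_apply_nonzero (hA : ∀ k j, A j k ≤ β j) (e : EIdx m n β A) (v : RowIdx m β) :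
    theta m n β A v e.1
      = (if tgtC hA e = v then (1:ℝ) else 0) - (if srcC e = v then 1 else 0) := by
  have h1 : ((fun j => (v j : ℕ)) = (fun j => (e.1.2 j : ℕ))) ↔ v = srcC e :=
    rowEq v _ (src_lt hA e)
  have h2 : ((fun j => (v j : ℕ)) = (fun j => (e.1.2 j : ℕ) + A j e.1.1)) ↔ v = tgtC hA e :=
    rowEq v _ (tgt_lt hA e)
  simp only [theta, Matrix.of_apply]
  rw [if_congr h1 rfl rfl, if_congr h2 rfl rfl]
  by_cases hs : v = srcC e
  · have ht : ¬ (v = tgtC hA e) := by rw [hs]; exact src_ne_tgt hA e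
    rw [if_pos hs, if_neg (show ¬ (tgtC hA e = v) from fun hh => ht hh.symm),
      if_pos hs.symm]
    ring
  · rw [if_neg hs, if_neg (show ¬ (srcC e = v) from fun hh => hs hh.symm)]
    by_cases ht : v = tgtC hA e
    · rw [if_pos ht, if_pos ht.symm]; ring
    · rw [if_neg ht, if_neg (show ¬ (tgtC hA e = v) from fun hh => ht hh.symm)]; ring

lemma theta_col_sum (hA : ∀ k j, A j k ≤ β j) (c : ColIdx m n β A) :
    (∑ w : RowIdx m β, theta m n β A w c) = if (∃ j, 0 < A j c.1) then 0 else -1 := by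
  classical
  by_cases hc : ∃ j, 0 < A j c.1
  · rw [if_pos hc]
    set e : EIdx m n β A := ⟨c, hc⟩ with he
    have hrw : ∀ w : RowIdx m β, theta m n β A w c
        = (if tgtC hA e = w then (1:ℝ) else 0) - (if srcC e = w then 1 else 0) :=
      fun w => theta_apply_nonzero hA e w
    rw [Finset.sum_congr rfl (fun w _ => hrw w), Finset.sum_sub_distrib]
    have hs1 : (∑ w : RowIdx m β, if tgtC hA e = w then (1:ℝ) else 0) = 1 := by
      rw [Finset.sum_ite_eq Finset.univ (tgtC hA e) (fun _ => (1:ℝ))]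
      simp
    have hs2 : (∑ w : RowIdx m β, if srcC e = w then (1:ℝ) else 0) = 1 := by
      rw [Finset.sum_ite_eq Finset.univ (srcC e) (fun _ => (1:ℝ))]
      simp
    rw [hs1, hs2]; ring
  · rw [if_neg hc]
    push_neg at hc
    have hAz : ∀ j, A j c.1 = 0 := fun j => Nat.le_zero.1 (hc j)
    have huv : ∀ j, (c.2 j : ℕ) < β j + 1 := by
      intro j; have h := (c.2 j).isLt; omega
    have hU : ∀ w : RowIdx m β, theta m n β A w c
        = if w = (fun j => (⟨(c.2 j : ℕ), huv j⟩ : Fin (β j + 1))) then (-1:ℝ) else 0 := by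
      intro w
      have hcong : (fun j => (c.2 j : ℕ) + A j c.1) = (fun j => (c.2 j : ℕ)) := by
        funext j; have := hAz j; omega
      simp only [theta, Matrix.of_apply, hcong]
      rw [if_congr (rowEq w _ huv) rfl rfl, if_congr (rowEq w _ huv) rfl rfl]
      by_cases h : w = (fun j => (⟨(c.2 j : ℕ), huv j⟩ : Fin (β j + 1))) <;> simp [h]
    rw [Finset.sum_congr rfl (fun w _ => hU w),
      Finset.sum_ite_eq' Finset.univ _ (fun _ => (-1:ℝ))]
    simp

/-- Counting lemma: sums against counts. -/
lemma count_sum (l : List (Fin n)) (h : Fin n → ℕ) :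
    (∑ k, h k * l.count k) = (l.map h).sum := by
  induction l with
  | nil => simp
  | cons a q ihq =>
    simp only [List.count_cons, beq_iff_eq, List.map_cons, List.sum_cons]
    have : ∀ k, h k * (q.count k + if a = k then 1 else 0)
        = h k * q.count k + (if a = k then h k else 0) := by
      intro k
      by_cases hk : a = k
      · simp [hk, Nat.mul_add]
      · simp [hk]
    rw [Finset.sum_congr rfl (fun k _ => this k), Finset.sum_add_distrib, ihq,
      Finset.sum_ite_eq Finset.univ a h]
    simp
    omega


/-- Target node for the path telescoping. -/
def tRowD (hb : ∀ j, b j ≤ β j) : RowIdx m β := fun j => ⟨b j, by have := hb j; omega⟩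

/-- Source node (origin). -/
def sRowD : RowIdx m β := fun j => ⟨0, by omega⟩

lemma path_telescope (hA : ∀ k j, A j k ≤ β j) (hb : ∀ j, b j ≤ β j) :
    ∀ (p : List (EIdx m n β A)) (v : RowIdx m β),
      IsPath srcC (tgtC hA) v (tRowD hb) p →
      ∀ j, (v j : ℕ) + (p.map (fun e => A j e.1.1)).sum = b j := by
  intro p
  induction p with
  | nil =>
    intro v hp j
    have : v = tRowD hb := hp
    subst this
    simp [tRowD]
  | cons e q ihq =>
    intro v hp j
    obtain ⟨hsrc, hq⟩ := hp
    have ih := ihq (tgtC hA e) hq j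
    have h1 : ((tgtC hA e) j : ℕ) = (e.1.2 j : ℕ) + A j e.1.1 := rfl
    have h2 : (v j : ℕ) = (e.1.2 j : ℕ) := by rw [← hsrc]; rfl
    simp only [List.map_cons, List.sum_cons]
    rw [h1] at ih
    omega

lemma mapg_sum :
    ∀ p : List (EIdx m n β A),
      ((p.map (fun e => fun k => if e.1.1 = k then (1:ℝ) else 0)).sum)
        = fun k => (((p.map (fun e => e.1.1)).count k : ℕ) : ℝ) := by
  intro p
  induction p with
  | nil => funext k; simp
  | cons e q ihq =>
    funext k
    simp only [List.map_cons, List.sum_cons, Pi.add_apply, ihq, List.count_cons, beq_iff_eq]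
    by_cases h : e.1.1 = k
    · simp [h]
      ring
    · have h' : ¬ (k = e.1.1) := fun hh => h hh.symm
      simp [h, h']

end Concrete


/-- Any nonnegative solution `𝐲` of `Θ𝐲 = 𝐛` projects (via `x̂ = E𝐲`) to a point
of the integer hull of `{x : Ax = b, x ≥ 0}`. -/
theorem stmt_10 (m n : ℕ) (hm : 0 < m) (hn : 0 < n)
    (A : Matrix (Fin m) (Fin n) ℕ) (β b : Fin m → ℕ)
    (hb : ∀ j, b j ≤ β j) (hA : ∀ k j, A j k ≤ β j)
    (y : ColIdx m n β A → ℝ) (hy : ∀ c, 0 ≤ y c)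
    (hΘ : (theta m n β A).mulVec y = bvec m β b) :
    (∀ j, ∑ k, (A j k : ℝ) * (∑ u : ∀ j' : Fin m, Fin (β j' - A j' k + 1), y ⟨k, u⟩)
        = (b j : ℝ)) ∧
    (fun k => ∑ u : ∀ j' : Fin m, Fin (β j' - A j' k + 1), y ⟨k, u⟩) ∈
      convexHull ℝ ((fun x : Fin n → ℕ => fun k => (x k : ℝ)) ''
        {x : Fin n → ℕ | ∀ j, ∑ k, A j k * x k = b j}) := by
  classical
  set tRow : RowIdx m β := tRowD hb with htRow
  set sRow : RowIdx m β := (sRowD : RowIdx m β) with hsRow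
  set φC : RowIdx m β → ℕ := fun v => ∑ j, (v j : ℕ) with hφC
  set g : EIdx m n β A → (Fin n → ℝ) := fun e => fun k => if e.1.1 = k then (1:ℝ) else 0
    with hg
  set f : EIdx m n β A → ℝ := fun e => y e.1 with hfdef
  -- the graph is graded by the coordinate sum
  have hφ : ∀ e : EIdx m n β A, φC (srcC e) < φC (tgtC hA e) := by
    intro e
    obtain ⟨j0, hj0⟩ := e.2
    have h1 : φC (tgtC hA e) = (∑ j, (e.1.2 j : ℕ)) + ∑ j, A j e.1.1 := by
      simp only [hφC]
      rw [← Finset.sum_add_distrib]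
      rfl
    have h2 : φC (srcC e) = ∑ j, (e.1.2 j : ℕ) := rfl
    have h3 : 0 < ∑ j, A j e.1.1 :=
      Finset.sum_pos' (fun j _ => Nat.zero_le _) ⟨j0, Finset.mem_univ j0, hj0⟩
    omega
  have hst : ∀ e : EIdx m n β A, tgtC hA e ≠ sRow := by
    intro e h
    obtain ⟨j0, hj0⟩ := e.2
    have := congrArg Fin.val (congrFun h j0)
    simp only [tgtC, hsRow, sRowD] at this
    omega
  -- flows on zero columns vanish
  have hzero : ∀ c : ColIdx m n β A, ¬ (∃ j, 0 < A j c.1) → y c = 0 := by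
    have hsum : (∑ w : RowIdx m β, (theta m n β A).mulVec y w)
        = ∑ w : RowIdx m β, bvec m β b w := by rw [hΘ]
    have hlhs : (∑ w : RowIdx m β, (theta m n β A).mulVec y w)
        = ∑ c : ColIdx m n β A, (∑ w : RowIdx m β, theta m n β A w c) * y c := by
      simp only [Matrix.mulVec, dotProduct]
      rw [Finset.sum_comm]
      apply Finset.sum_congr rfl
      intro c _
      rw [Finset.sum_mul]
    have hrhs : (∑ w : RowIdx m β, bvec m β b w) = 0 := by
      simp only [bvec]
      rw [Finset.sum_sub_distrib]
      have e1 : (∑ w : RowIdx m β, if (fun j => (w j : ℕ)) = b then (1:ℝ) else 0) = 1 := by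
        have : ∀ w : RowIdx m β, (if (fun j => (w j : ℕ)) = b then (1:ℝ) else 0)
            = if w = tRow then 1 else 0 := by
          intro w
          exact if_congr (rowEq w b (fun j => by have := hb j; omega)) rfl rfl
        rw [Finset.sum_congr rfl (fun w _ => this w),
          Finset.sum_ite_eq' Finset.univ tRow (fun _ => (1:ℝ))]
        simp
      have e2 : (∑ w : RowIdx m β,
          if (fun j => (w j : ℕ)) = (fun _ => (0:ℕ)) then (1:ℝ) else 0) = 1 := by
        have : ∀ w : RowIdx m β, (if (fun j => (w j : ℕ)) = (fun _ => (0:ℕ)) then (1:ℝ) else 0)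
            = if w = sRow then 1 else 0 := by
          intro w
          exact if_congr (rowEq w _ (fun j => by omega)) rfl rfl
        rw [Finset.sum_congr rfl (fun w _ => this w),
          Finset.sum_ite_eq' Finset.univ sRow (fun _ => (1:ℝ))]
        simp
      rw [e1, e2]; ring
    rw [hlhs, hrhs] at hsum
    have hsum2 : (∑ c : ColIdx m n β A, (if (∃ j, 0 < A j c.1) then (0:ℝ) else y c)) = 0 := by
      have : ∀ c : ColIdx m n β A,
          (∑ w : RowIdx m β, theta m n β A w c) * y c = -(if (∃ j, 0 < A j c.1) then (0:ℝ) else y c) := by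
        intro c
        rw [theta_col_sum hA c]
        by_cases h : ∃ j, 0 < A j c.1
        · rw [if_pos h, if_pos h, zero_mul, neg_zero]
        · rw [if_neg h, if_neg h]; ring
      rw [Finset.sum_congr rfl (fun c _ => this c)] at hsum
      rw [Finset.sum_neg_distrib] at hsum
      linarith
    intro c hc
    have := (Finset.sum_eq_zero_iff_of_nonneg (by
      intro c' _
      by_cases h : ∃ j, 0 < A j c'.1 <;> simp [h, hy c'])).1 hsum2 c (Finset.mem_univ c)
    rw [if_neg hc] at this
    exact this
  -- divergence form of the flow equation
  have hdiv : ∀ v : RowIdx m β,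
      (∑ e : EIdx m n β A, if tgtC hA e = v then f e else 0)
        - (∑ e : EIdx m n β A, if srcC e = v then f e else 0)
        = (if v = tRow then 1 else 0) - (if v = sRow then 1 else 0) := by
    intro v
    have h := congrFun hΘ v
    have hlhs : (theta m n β A).mulVec y v
        = ∑ c : ColIdx m n β A, theta m n β A v c * y c := by
      simp only [Matrix.mulVec, dotProduct]
    have hsplit : (∑ c : ColIdx m n β A, theta m n β A v c * y c)
        = ∑ e : EIdx m n β A, theta m n β A v e.1 * y e.1 := by
      rw [← Finset.sum_filter_add_sum_filter_not Finset.univ (fun c : ColIdx m n β A => ∃ j, 0 < A j c.1)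
        (fun c => theta m n β A v c * y c)]
      have hz : (∑ c ∈ Finset.univ.filter (fun c => ¬ (∃ j, 0 < A j c.1)), theta m n β A v c * y c) = 0 := by
        apply Finset.sum_eq_zero
        intro c hc
        rw [Finset.mem_filter] at hc
        rw [hzero c hc.2, mul_zero]
      rw [hz, add_zero]
      exact Finset.sum_subtype (Finset.univ.filter (fun c : ColIdx m n β A => ∃ j, 0 < A j c.1))
        (fun c => by simp) (fun c => theta m n β A v c * y c)
    have hterm : ∀ e : EIdx m n β A, theta m n β A v e.1 * y e.1
        = (if tgtC hA e = v then f e else 0) - (if srcC e = v then f e else 0) := by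
      intro e
      rw [theta_apply_nonzero hA e v, sub_mul]
      congr 1
      · by_cases h1 : tgtC hA e = v <;> simp [h1, hfdef]
      · by_cases h1 : srcC e = v <;> simp [h1, hfdef]
    have hrhs : bvec m β b v = (if v = tRow then 1 else 0) - (if v = sRow then 1 else 0) := by
      simp only [bvec]
      congr 1
      · exact if_congr (rowEq v b (fun j => by have := hb j; omega)) rfl rfl
      · exact if_congr (rowEq v _ (fun j => by omega)) rfl rfl
    rw [hlhs, hsplit, Finset.sum_congr rfl (fun e _ => hterm e),
      Finset.sum_sub_distrib, hrhs] at h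
    exact h
  -- apply the abstract flow decomposition
  have hmem := flow_hull srcC (tgtC hA) φC hφ sRow tRow hst g
    ((Finset.univ.filter (fun e : EIdx m n β A => f e ≠ 0)).card) f le_rfl
    (fun e => hy e.1) hdiv
  -- path sums are integer points
  have hsub : {z | ∃ p, IsPath srcC (tgtC hA) sRow tRow p ∧ z = (p.map g).sum}
      ⊆ (fun x : Fin n → ℕ => fun k => (x k : ℝ)) ''
        {x : Fin n → ℕ | ∀ j, ∑ k, A j k * x k = b j} := by
    rintro z ⟨p, hp, rfl⟩
    refine ⟨fun k => ((p.map (fun e => e.1.1)).count k), ?_, ?_⟩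
    · intro j
      rw [count_sum (p.map (fun e => e.1.1)) (fun k => A j k)]
      rw [List.map_map]
      have htel := path_telescope hA hb p sRow hp j
      have h0 : ((sRow : RowIdx m β) j : ℕ) = 0 := rfl
      rw [h0] at htel
      rw [← htel]
      simp [Function.comp]
    · rw [mapg_sum p]
  -- identify x̂ with the projected flow
  have hxhat : (fun k => ∑ u : ∀ j' : Fin m, Fin (β j' - A j' k + 1), y ⟨k, u⟩)
      = ∑ e : EIdx m n β A, f e • g e := by
    funext k
    rw [Finset.sum_apply]
    have hterm : ∀ e : EIdx m n β A, (f e • g e) k = if e.1.1 = k then y e.1 else 0 := by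
      intro e
      simp only [Pi.smul_apply, hg, smul_eq_mul, hfdef]
      by_cases h : e.1.1 = k <;> simp [h]
    rw [Finset.sum_congr rfl (fun e _ => hterm e)]
    have hext : (∑ e : EIdx m n β A, if e.1.1 = k then y e.1 else 0)
        = ∑ c : ColIdx m n β A, if c.1 = k then y c else 0 := by
      rw [← Finset.sum_filter_add_sum_filter_not Finset.univ (fun c : ColIdx m n β A => ∃ j, 0 < A j c.1)
        (fun c => if c.1 = k then y c else 0)]
      have hz : (∑ c ∈ Finset.univ.filter (fun c => ¬ (∃ j, 0 < A j c.1)),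
          if c.1 = k then y c else 0) = 0 := by
        apply Finset.sum_eq_zero
        intro c hc
        rw [Finset.mem_filter] at hc
        rw [hzero c hc.2]
        simp
      rw [hz, add_zero]
      exact (Finset.sum_subtype (Finset.univ.filter (fun c : ColIdx m n β A => ∃ j, 0 < A j c.1))
        (fun c => by simp) (fun c => if c.1 = k then y c else 0)).symm
    rw [hext]
    rw [← Finset.univ_sigma_univ, Finset.sum_sigma]
    have hinner : ∀ k' : Fin n,
        (∑ u : ∀ j' : Fin m, Fin (β j' - A j' k' + 1),
          if k' = k then y ⟨k', u⟩ else 0)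
        = if k' = k then (∑ u : ∀ j' : Fin m, Fin (β j' - A j' k' + 1), y ⟨k', u⟩) else 0 := by
      intro k'
      by_cases h : k' = k <;> simp [h]
    rw [Finset.sum_congr rfl (fun k' _ => hinner k')]
    rw [Finset.sum_ite_eq' Finset.univ k
      (fun k' => ∑ u : ∀ j' : Fin m, Fin (β j' - A j' k' + 1), y ⟨k', u⟩)]
    simp
  have hmain : (fun k => ∑ u : ∀ j' : Fin m, Fin (β j' - A j' k + 1), y ⟨k, u⟩) ∈
      convexHull ℝ ((fun x : Fin n → ℕ => fun k => (x k : ℝ)) ''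
        {x : Fin n → ℕ | ∀ j, ∑ k, A j k * x k = b j}) := by
    rw [hxhat]
    exact convexHull_mono hsub hmem
  refine ⟨?_, hmain⟩
  -- the affine equations are preserved by convex hulls
  set Sreal : Set (Fin n → ℝ) := {x | ∀ j, ∑ k, (A j k : ℝ) * x k = (b j : ℝ)} with hSreal
  have hconv : Convex ℝ Sreal := by
    intro x hx z hz a c ha hc hac
    intro j
    have hx' := hx j
    have hz' := hz j
    have : ∀ k, (A j k : ℝ) * (a * x k + c * z k)
        = a * ((A j k : ℝ) * x k) + c * ((A j k : ℝ) * z k) := by intro k; ring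
    calc (∑ k, (A j k : ℝ) * ((a • x + c • z) k))
        = ∑ k, (a * ((A j k : ℝ) * x k) + c * ((A j k : ℝ) * z k)) := by
          apply Finset.sum_congr rfl
          intro k _
          simp only [Pi.add_apply, Pi.smul_apply, smul_eq_mul]
          ring
      _ = a * (∑ k, (A j k : ℝ) * x k) + c * (∑ k, (A j k : ℝ) * z k) := by
          rw [Finset.sum_add_distrib, Finset.mul_sum, Finset.mul_sum]
      _ = (b j : ℝ) := by rw [hx', hz', ← add_mul, hac, one_mul]
  have himg : (fun x : Fin n → ℕ => fun k => (x k : ℝ)) ''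
      {x : Fin n → ℕ | ∀ j, ∑ k, A j k * x k = b j} ⊆ Sreal := by
    rintro z ⟨x, hx, rfl⟩
    intro j
    have := hx j
    push_cast [← this]
    rfl
  have := convexHull_min himg hconv hmain
  exact this
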